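/- Moments of the random-reset estimator in the tightness construction. Consider the single-step (H = 1) MDP with two states {x₁, x₂}, initial distribution μ(x₁) = p, μ(x₂) = 1 − p with p ∈ (0,1), action set {y₀, y₁, …, y_{|Y|−1}} with |Y| ≥ 2, base policy π playing y₀ deterministically in every state, and rewards r(x, y_k) = R_max/2 for all k ≠ 1, r(x₁, y₁) = R_max/2 + τ, r(x₂, y₁) = R_max/2 + ε, where 0 < τ ≤ R_max/2 and 0 ≤ ε ≤ τ. Let the greedy policy π⁺ play y₁ everywhere. Sample x ~ μ and y ~ Unif(Y) and define Y₁ = |Y|·(1{y = y₁} − 1{y = y₀})·r(x, y). Then E[Y₁] = p·τ + (1 − p)·ε = 𝔸_{π,μ}(π⁺), and Var(Y₁) ≥ |Y|·R_max²/4. -/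

import Mathlib

open Finset

lemma sum_two_support {m : ℕ} (hm : 2 ≤ m) (f : Fin m → ℝ)
    (h : ∀ y : Fin m, (y : ℕ) ≠ 0 → (y : ℕ) ≠ 1 → f y = 0) :
    ∑ y, f y = f ⟨0, Nat.zero_lt_of_lt hm⟩ + f ⟨1, hm⟩ := by
  have : ∀ y : Fin m, f y =
      (if y = (⟨0, Nat.zero_lt_of_lt hm⟩ : Fin m) then f ⟨0, Nat.zero_lt_of_lt hm⟩ else 0)
      + (if y = (⟨1, hm⟩ : Fin m) then f ⟨1, hm⟩ else 0) := by
    intro y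
    by_cases h0 : y = (⟨0, Nat.zero_lt_of_lt hm⟩ : Fin m)
    · subst h0; simp
    · by_cases h1 : y = (⟨1, hm⟩ : Fin m)
      · subst h1; simp [Fin.ext_iff]
      · simp only [if_neg h0, if_neg h1, add_zero]
        exact h y (fun hc => h0 (Fin.ext hc)) (fun hc => h1 (Fin.ext hc))
  rw [Finset.sum_congr rfl (fun y _ => this y), Finset.sum_add_distrib]
  simp


/-- **Moments of the random-reset estimator in the tightness construction.**
In the single-step MDP with two states (`0 = x₁`, `1 = x₂`), `m = |Y| ≥ 2` actions,
initial distribution `μ = (p, 1−p)`, base policy playing action `y₀` everywhere and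
rewards `r(x, y_k) = R_max/2` for `k ≠ 1`, `r(x₁, y₁) = R_max/2 + τ`,
`r(x₂, y₁) = R_max/2 + ε`, the per-sample term
`Y₁ = |Y|·(1{y = y₁} − 1{y = y₀})·r(x,y)` under `x ~ μ`, `y ~ Unif(Y)` satisfies
`E[Y₁] = p·τ + (1−p)·ε = 𝔸_{π,μ}(π⁺)` and `Var(Y₁) ≥ |Y|·R_max²/4`,
where `π⁺` plays `y₁` everywhere, so that
`𝔸_{π,μ}(π⁺) = E_{x~μ}[A^π(x, y₁)]` with `A^π(x,y) = r(x,y) − r(x,y₀)`. -/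
theorem tightness_construction_moments
    (m : ℕ) (hm : 2 ≤ m) (p τ ε Rmax : ℝ)
    (hp0 : 0 < p) (hp1 : p < 1) (hτ0 : 0 < τ) (hτR : τ ≤ Rmax / 2)
    (hε0 : 0 ≤ ε) (hετ : ε ≤ τ) :
    let μ : Fin 2 → ℝ := ![p, 1 - p]
    let r : Fin 2 → Fin m → ℝ := fun x k =>
      if (k : ℕ) = 1 then Rmax / 2 + (if x = 0 then τ else ε) else Rmax / 2
    let Y1 : Fin 2 → Fin m → ℝ := fun x y =>
      (m : ℝ) * ((if (y : ℕ) = 1 then 1 else 0) - (if (y : ℕ) = 0 then 1 else 0)) * r x y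
    let Edist : (Fin 2 → Fin m → ℝ) → ℝ := fun f =>
      ∑ x, μ x * ((m : ℝ))⁻¹ * ∑ y, f x y
    let A : Fin 2 → Fin m → ℝ := fun x y => r x y - r x ⟨0, by omega⟩
    Edist Y1 = p * τ + (1 - p) * ε ∧
      Edist Y1 = ∑ x, μ x * A x ⟨1, by omega⟩ ∧
      (m : ℝ) * Rmax ^ 2 / 4 ≤ Edist (fun x y => Y1 x y ^ 2) - (Edist Y1) ^ 2 := by
  intro μ r Y1 Edist A
  have hm0 : (m : ℝ) ≠ 0 := by
    have : (0:ℕ) < m := by omega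
    exact_mod_cast this.ne'
  have hsum : ∀ x, ∑ y, Y1 x y = (m : ℝ) * (if x = 0 then τ else ε) := by
    intro x
    rw [sum_two_support hm _ (by intro y h0 h1; simp [Y1, h0, h1])]
    by_cases hx : x = 0 <;> simp [Y1, r, hx] <;> ring
  have hsq : ∀ x, ∑ y, Y1 x y ^ 2 =
      (m : ℝ) ^ 2 * ((Rmax / 2) ^ 2 + (Rmax / 2 + (if x = 0 then τ else ε)) ^ 2) := by
    intro x
    rw [sum_two_support hm _ (by intro y h0 h1; simp [Y1, h0, h1])]
    simp [Y1, r]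
    ring
  have hE : Edist Y1 = p * τ + (1 - p) * ε := by
    simp only [Edist, hsum, Fin.sum_univ_two]
    simp [μ]
    field_simp
  refine ⟨hE, ?_, ?_⟩
  · rw [hE]
    simp only [Fin.sum_univ_two, A, r]
    norm_num [μ]
  · have hEsq : Edist (fun x y => Y1 x y ^ 2) =
        (m : ℝ) * (p * ((Rmax / 2) ^ 2 + (Rmax / 2 + τ) ^ 2)
          + (1 - p) * ((Rmax / 2) ^ 2 + (Rmax / 2 + ε) ^ 2)) := by
      simp only [Edist, hsq, Fin.sum_univ_two]
      simp [μ]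
      field_simp
    rw [hEsq, hE]
    have hm2 : (2 : ℝ) ≤ (m : ℝ) := by exact_mod_cast hm
    have hR : 0 < Rmax := by linarith
    have hE1 : p * τ + (1 - p) * ε ≤ Rmax / 2 := by nlinarith
    have hE0 : 0 ≤ p * τ + (1 - p) * ε := by nlinarith
    have h3 : (p * τ + (1 - p) * ε) ^ 2 ≤ (Rmax / 2) ^ 2 := by
      have := pow_le_pow_left₀ hE0 hE1 2
      linarith
    have key : Rmax ^ 2 / 2 ≤ p * ((Rmax / 2) ^ 2 + (Rmax / 2 + τ) ^ 2)
        + (1 - p) * ((Rmax / 2) ^ 2 + (Rmax / 2 + ε) ^ 2) := by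
      nlinarith [mul_nonneg hp0.le (mul_nonneg hτ0.le hR.le),
        mul_nonneg (by linarith : (0:ℝ) ≤ 1 - p) (mul_nonneg hε0 hR.le),
        mul_nonneg hp0.le (sq_nonneg τ),
        mul_nonneg (by linarith : (0:ℝ) ≤ 1 - p) (sq_nonneg ε)]
    have hmul : (m : ℝ) * (Rmax ^ 2 / 2) ≤ (m : ℝ) * (p * ((Rmax / 2) ^ 2 + (Rmax / 2 + τ) ^ 2)
        + (1 - p) * ((Rmax / 2) ^ 2 + (Rmax / 2 + ε) ^ 2)) :=
      mul_le_mul_of_nonneg_left key (by linarith)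
    nlinarith [mul_nonneg (by linarith : (0:ℝ) ≤ (m:ℝ) - 1) (sq_nonneg Rmax)]
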